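/- Let d be even, i even with 0 ≤ i ≤ d, and k an integer with 0 ≤ k ≤ d. Then the binary Krawtchouk polynomials with parameter d satisfy |K_i(k)| ≤ C(d, d/2) · C(d/2, i/2) / C(d, k). -/

import Mathlib

open Finset

open Polynomial

/-- The Krawtchouk polynomial with parameters `d` and `q`. -/
def krawtchouk (d q r t : ℕ) : ℤ :=
  ∑ i ∈ Finset.range (r + 1),
    (t.choose i : ℤ) * ((d - t).choose (r - i) : ℤ) * (-1) ^ i * ((q : ℤ) - 1) ^ (r - i)

lemma kraw_two (d r t : ℕ) :
    krawtchouk d 2 r t = ∑ j ∈ Finset.range (r + 1),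
      (-1) ^ j * (t.choose j : ℤ) * ((d - t).choose (r - j) : ℤ) := by
  unfold krawtchouk
  refine Finset.sum_congr rfl fun j _ => ?_
  norm_num
  ring

lemma choose_mul_choose_sub (m p q : ℕ) :
    m.choose p * (m - p).choose q = m.choose q * (m - q).choose p := by
  rcases le_or_gt (p + q) m with h | h
  · have h1 := Nat.choose_mul (n := m) (Nat.le_add_right p q)
    have h2 := Nat.choose_mul (n := m) (Nat.le_add_left q p)
    have hs : (p + q).choose p = (p + q).choose q := by
      rw [← Nat.choose_symm (Nat.le_add_left q p), Nat.add_sub_cancel]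
    rw [show p + q - p = q by omega] at h1
    rw [show p + q - q = p by omega] at h2
    rw [← h1, ← h2, hs]
  · have e1 : m.choose p * (m - p).choose q = 0 := by
      rcases le_or_gt p m with hp | hp
      · rw [Nat.choose_eq_zero_of_lt (show m - p < q by omega), mul_zero]
      · rw [Nat.choose_eq_zero_of_lt hp, zero_mul]
    have e2 : m.choose q * (m - q).choose p = 0 := by
      rcases le_or_gt q m with hq | hq
      · rw [Nat.choose_eq_zero_of_lt (show m - q < p by omega), mul_zero]
      · rw [Nat.choose_eq_zero_of_lt hq, zero_mul]
    rw [e1, e2]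

lemma key_choose (d i k j : ℕ) (hi : i ≤ d) (hk : k ≤ d) (hji : j ≤ i) (hjk : j ≤ k) :
    d.choose k * (k.choose j * (d - k).choose (i - j)) =
    d.choose i * (i.choose j * (d - i).choose (k - j)) := by
  have h1 := Nat.choose_mul (n := d) hjk
  have h2 := Nat.choose_mul (n := d) hji
  have h3 := choose_mul_choose_sub (d - j) (k - j) (i - j)
  rw [show d - j - (k - j) = d - k by omega, show d - j - (i - j) = d - i by omega] at h3
  calc d.choose k * (k.choose j * (d - k).choose (i - j))
      = (d.choose k * k.choose j) * (d - k).choose (i - j) := by ring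
    _ = (d.choose j * (d - j).choose (k - j)) * (d - k).choose (i - j) := by rw [h1]
    _ = d.choose j * ((d - j).choose (k - j) * (d - k).choose (i - j)) := by ring
    _ = d.choose j * ((d - j).choose (i - j) * (d - i).choose (k - j)) := by rw [h3]
    _ = (d.choose j * (d - j).choose (i - j)) * (d - i).choose (k - j) := by ring
    _ = (d.choose i * i.choose j) * (d - i).choose (k - j) := by rw [← h2]
    _ = _ := by ring

lemma kraw_symm (d i k : ℕ) (hi : i ≤ d) (hk : k ≤ d) :
    (d.choose k : ℤ) * krawtchouk d 2 i k = (d.choose i : ℤ) * krawtchouk d 2 k i := by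
  rw [kraw_two, kraw_two, Finset.mul_sum, Finset.mul_sum]
  have hL : ∑ j ∈ Finset.range (i + 1),
      (d.choose k : ℤ) * ((-1) ^ j * (k.choose j : ℤ) * ((d - k).choose (i - j) : ℤ))
      = ∑ j ∈ Finset.range (min i k + 1),
      (d.choose k : ℤ) * ((-1) ^ j * (k.choose j : ℤ) * ((d - k).choose (i - j) : ℤ)) := by
    refine (Finset.sum_subset ?_ ?_).symm
    · intro x hx; simp only [Finset.mem_range] at *; omega
    · intro x hx hx'
      simp only [Finset.mem_range] at hx hx'
      have : k.choose x = 0 := Nat.choose_eq_zero_of_lt (by omega)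
      simp [this]
  have hR : ∑ j ∈ Finset.range (k + 1),
      (d.choose i : ℤ) * ((-1) ^ j * (i.choose j : ℤ) * ((d - i).choose (k - j) : ℤ))
      = ∑ j ∈ Finset.range (min i k + 1),
      (d.choose i : ℤ) * ((-1) ^ j * (i.choose j : ℤ) * ((d - i).choose (k - j) : ℤ)) := by
    refine (Finset.sum_subset ?_ ?_).symm
    · intro x hx; simp only [Finset.mem_range] at *; omega
    · intro x hx hx'
      simp only [Finset.mem_range] at hx hx'
      have : i.choose x = 0 := Nat.choose_eq_zero_of_lt (by omega)
      simp [this]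
  rw [hL, hR]
  refine Finset.sum_congr rfl fun j hj => ?_
  simp only [Finset.mem_range] at hj
  have hc := key_choose d i k j hi hk (by omega) (by omega)
  have hc' : (d.choose k : ℤ) * ((k.choose j : ℤ) * ((d - k).choose (i - j) : ℤ))
      = (d.choose i : ℤ) * ((i.choose j : ℤ) * ((d - i).choose (k - j) : ℤ)) := by
    exact_mod_cast congrArg (Nat.cast : ℕ → ℤ) hc
  linear_combination ((-1 : ℤ)) ^ j * hc'

lemma coeff_one_sub_X_pow (t j : ℕ) :
    ((1 - X : Polynomial ℤ) ^ t).coeff j = (-1) ^ j * t.choose j := by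
  have h : (1 - X : Polynomial ℤ) = C (-1) * (X + C (-1)) := by
    simp [mul_add]
    ring
  rw [h, mul_pow, ← C_pow, coeff_C_mul, coeff_X_add_C_pow]
  rcases le_or_gt j t with hj | hj
  · have he : (-1 : ℤ) ^ t * (-1) ^ (t - j) = (-1) ^ j := by
      rw [← pow_add, show t + (t - j) = 2 * (t - j) + j by omega, pow_add, pow_mul]
      norm_num
    rw [← mul_assoc, he]
  · simp [Nat.choose_eq_zero_of_lt hj]

theorem tst : True := trivial

lemma coeff_one_sub_X_pow' (R : Type*) [CommRing R] (t j : ℕ) :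
    ((1 - X : Polynomial R) ^ t).coeff j = (-1) ^ j * t.choose j := by
  have h : (1 - X : Polynomial R) = C (-1) * (X + C (-1)) := by
    simp [mul_add]
    ring
  rw [h, mul_pow, ← C_pow, coeff_C_mul, coeff_X_add_C_pow]
  rcases le_or_gt j t with hj | hj
  · have he : (-1 : R) ^ t * (-1) ^ (t - j) = (-1) ^ j := by
      rw [← pow_add, show t + (t - j) = 2 * (t - j) + j by omega, pow_add, pow_mul]
      norm_num
    rw [← mul_assoc, he]
  · simp [Nat.choose_eq_zero_of_lt hj]

lemma coeff_kraw (R : Type*) [CommRing R] (d t r : ℕ) :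
    (((1 - X) ^ t * (1 + X) ^ (d - t) : Polynomial R)).coeff r
      = ((krawtchouk d 2 r t : ℤ) : R) := by
  rw [Polynomial.coeff_mul, kraw_two, Finset.Nat.sum_antidiagonal_eq_sum_range_succ_mk]
  push_cast
  refine Finset.sum_congr rfl fun j hj => ?_
  rw [coeff_one_sub_X_pow', coeff_one_add_X_pow]

lemma eval_kraw (d t : ℕ) (ht : t ≤ d) (z : ℂ) :
    ∑ r ∈ Finset.range (d + 1), (krawtchouk d 2 r t : ℂ) * z ^ r
      = (1 - z) ^ t * (1 + z) ^ (d - t) := by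
  have h1 : ((1 - X : Polynomial ℂ)).natDegree ≤ 1 := by
    refine le_trans (natDegree_sub_le _ _) ?_
    simp
  have h2 : ((1 + X : Polynomial ℂ)).natDegree ≤ 1 := by
    refine le_trans (natDegree_add_le _ _) ?_
    simp
  have hdeg : (((1 - X) ^ t * (1 + X) ^ (d - t) : Polynomial ℂ)).natDegree < d + 1 := by
    refine Nat.lt_succ_of_le (le_trans (natDegree_mul_le) ?_)
    have h3 : ((1 - X : Polynomial ℂ) ^ t).natDegree ≤ t :=
      le_trans natDegree_pow_le (by simpa using Nat.mul_le_mul (le_refl t) h1)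
    have h4 : ((1 + X : Polynomial ℂ) ^ (d - t)).natDegree ≤ d - t :=
      le_trans natDegree_pow_le (by simpa using Nat.mul_le_mul (le_refl (d - t)) h2)
    exact le_trans (Nat.add_le_add h3 h4) (by omega)
  have := Polynomial.eval_eq_sum_range' hdeg z
  simp only [eval_mul, eval_pow, eval_sub, eval_add, eval_one, eval_X] at this
  rw [this]
  exact Finset.sum_congr rfl fun r hr => by rw [coeff_kraw]

lemma kraw_central (n a : ℕ) (han : a ≤ n) :
    krawtchouk (n + n) 2 (a + a) n = (-1) ^ a * (n.choose a : ℤ) := by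
  have h := coeff_kraw ℤ (n + n) n (a + a)
  rw [show n + n - n = n by omega, Int.cast_id] at h
  rw [← h]
  have h2 : ((1 - X) ^ n * (1 + X) ^ n : Polynomial ℤ) = ((-(X ^ 2)) + 1) ^ n := by
    rw [← mul_pow]
    ring_nf
  rw [h2, add_pow, Polynomial.finset_sum_coeff]
  have key : ∀ m : ℕ, ((-X ^ 2 : Polynomial ℤ) ^ m * 1 ^ (n - m) * (n.choose m : Polynomial ℤ)).coeff (a + a)
      = if a + a = 2 * m then (-1) ^ m * (n.choose m : ℤ) else 0 := by
    intro m
    have he : ((-X ^ 2 : Polynomial ℤ) ^ m * 1 ^ (n - m) * (n.choose m : Polynomial ℤ))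
        = C ((-1) ^ m * (n.choose m : ℤ)) * X ^ (2 * m) := by
      simp only [map_mul, map_pow, map_neg, map_one, Polynomial.C_eq_natCast, one_pow, mul_one]
      rw [neg_pow, pow_mul]
      ring
    rw [he, Polynomial.coeff_C_mul, Polynomial.coeff_X_pow]
    split <;> simp
  rw [Finset.sum_eq_single a]
  · rw [key]
    simp [show a + a = 2 * a by omega]
  · intro m hm hne
    rw [key, if_neg (by omega)]
  · intro h
    exact absurd (Finset.mem_range.mpr (by omega)) h

lemma neg_one_pow_helper (x y : ℂ) (a b : ℕ) :
    (-1 : ℂ) ^ a * ((-x) ^ a * y ^ b) = x ^ a * y ^ b := by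
  have h : (-1 : ℂ) ^ a * (-1 : ℂ) ^ a = 1 := by
    rw [← mul_pow]
    norm_num
  calc (-1 : ℂ) ^ a * ((-x) ^ a * y ^ b)
      = ((-1) ^ a * (-1) ^ a) * (x ^ a * y ^ b) := by rw [neg_pow]; ring
    _ = x ^ a * y ^ b := by rw [h, one_mul]

lemma kraw_abs_le (d i k a n : ℕ) (hd : d = n + n) (hi : i = a + a)
    (hik : i ≤ d) (hk : k ≤ d) :
    |krawtchouk d 2 k i| ≤ (-1) ^ a * krawtchouk d 2 n i := by
  set N := d + 1 with hN
  set ζ : ℂ := Complex.exp (2 * Real.pi * Complex.I / N) with hζ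
  have hprim : IsPrimitiveRoot ζ N := Complex.isPrimitiveRoot_exp N (by omega)
  have hζN : ζ ^ N = 1 := hprim.pow_eq_one
  have habsζ : ‖ζ‖ = 1 := by
    rw [hζ, show (2 * (Real.pi : ℝ) * Complex.I / (N : ℂ))
        = ((2 * Real.pi / N : ℝ) : ℂ) * Complex.I by push_cast; ring]
    exact Complex.norm_exp_ofReal_mul_I _
  have hgeom : ∀ u : ℂ, u ^ N = 1 →
      ∑ j ∈ Finset.range N, u ^ j = if u = 1 then (N : ℂ) else 0 := by
    intro u hu
    split
    · next h => simp [h]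
    · next h =>
      rw [geom_sum_eq h, hu]
      simp
  have hsum : ∀ m : ℕ, m ≤ d →
      ∑ j ∈ Finset.range N, ζ ^ (j * (N - m)) * ((1 - ζ ^ j) ^ i * (1 + ζ ^ j) ^ (d - i))
        = (N : ℂ) * (krawtchouk d 2 m i : ℂ) := by
    intro m hm
    have hev : ∀ j : ℕ, (1 - ζ ^ j) ^ i * (1 + ζ ^ j) ^ (d - i)
        = ∑ r ∈ Finset.range (d + 1), (krawtchouk d 2 r i : ℂ) * (ζ ^ j) ^ r :=
      fun j => (eval_kraw d i hik (ζ ^ j)).symm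
    calc ∑ j ∈ Finset.range N, ζ ^ (j * (N - m)) * ((1 - ζ ^ j) ^ i * (1 + ζ ^ j) ^ (d - i))
        = ∑ j ∈ Finset.range N, ∑ r ∈ Finset.range (d + 1),
            (krawtchouk d 2 r i : ℂ) * (ζ ^ (N - m + r)) ^ j := by
          refine Finset.sum_congr rfl fun j hj => ?_
          rw [hev j, Finset.mul_sum]
          refine Finset.sum_congr rfl fun r hr => ?_
          have he : ζ ^ (j * (N - m)) * (ζ ^ j) ^ r = (ζ ^ (N - m + r)) ^ j := by
            rw [← pow_mul, ← pow_mul, ← pow_add]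
            congr 1
            ring
          rw [← he]
          ring
      _ = ∑ r ∈ Finset.range (d + 1),
            (krawtchouk d 2 r i : ℂ) * (if ζ ^ (N - m + r) = 1 then (N : ℂ) else 0) := by
          rw [Finset.sum_comm]
          refine Finset.sum_congr rfl fun r hr => ?_
          rw [← Finset.mul_sum, hgeom _ (by rw [← pow_mul, mul_comm, pow_mul, hζN, one_pow])]
      _ = (N : ℂ) * (krawtchouk d 2 m i : ℂ) := by
          rw [Finset.sum_eq_single m]
          · rw [if_pos, mul_comm]
            rw [hprim.pow_eq_one_iff_dvd]
            exact ⟨1, by omega⟩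
          · intro r hr hne
            simp only [Finset.mem_range] at hr
            rw [if_neg, mul_zero]
            rw [hprim.pow_eq_one_iff_dvd]
            rintro ⟨c, hc⟩
            rcases c with _ | _ | c
            · omega
            · omega
            · have h2N : N * 2 ≤ N * (c + 1 + 1) := Nat.mul_le_mul (le_refl N) (by omega)
              omega
          · intro hm'
            exact absurd (Finset.mem_range.mpr (by omega)) hm'
  set b := n - a with hb
  have hbb : d - i = b + b := by omega
  have hkey : ∀ j : ℕ, ((-1 : ℂ)) ^ a *
      (ζ ^ (j * (N - n)) * ((1 - ζ ^ j) ^ i * (1 + ζ ^ j) ^ (d - i)))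
      = ((‖(1 - ζ ^ j) ^ i * (1 + ζ ^ j) ^ (d - i)‖ : ℝ) : ℂ) := by
    intro j
    set w : ℂ := Complex.exp ((Real.pi * j / N : ℝ) * Complex.I) with hw
    have habsw : ‖w‖ = 1 := Complex.norm_exp_ofReal_mul_I _
    have hw2 : w ^ 2 = ζ ^ j := by
      rw [hw, hζ, ← Complex.exp_nat_mul, ← Complex.exp_nat_mul]
      congr 1
      push_cast
      ring
    set c : ℂ := (starRingEnd ℂ) w with hc
    have hwc : w * c = 1 := by
      rw [hc, Complex.mul_conj, Complex.normSq_eq_norm_sq, habsw]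
      norm_num
    have h1 : (1 - ζ ^ j) = (c - w) * w := by
      rw [← hw2]
      linear_combination -hwc
    have h2' : (1 + ζ ^ j) = (c + w) * w := by
      rw [← hw2]
      linear_combination -hwc
    have hA : (c - w) * (c - w) = -((Complex.normSq (c - w) : ℝ) : ℂ) := by
      have h := Complex.mul_conj (c - w)
      rw [show (starRingEnd ℂ) (c - w) = w - c by simp [hc, map_sub]; try ring] at h
      linear_combination -h
    have hB : (c + w) * (c + w) = ((Complex.normSq (c + w) : ℝ) : ℂ) := by
      have h := Complex.mul_conj (c + w)
      rw [show (starRingEnd ℂ) (c + w) = w + c by simp [hc, map_add]; try ring] at h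
      linear_combination h
    have hT : ζ ^ (j * (N - n)) * ((1 - ζ ^ j) ^ i * (1 + ζ ^ j) ^ (d - i))
        = (c - w) ^ i * (c + w) ^ (d - i) := by
      have e1 : ζ ^ (j * (N - n)) = w ^ (2 * (N - n)) := by
        rw [pow_mul, ← hw2, ← pow_mul]
      calc ζ ^ (j * (N - n)) * ((1 - ζ ^ j) ^ i * (1 + ζ ^ j) ^ (d - i))
          = w ^ (2 * (N - n)) * ((c - w) ^ i * w ^ i * ((c + w) ^ (d - i) * w ^ (d - i))) := by
            rw [e1, h1, h2', mul_pow, mul_pow]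
        _ = (c - w) ^ i * (c + w) ^ (d - i) * w ^ (2 * (N - n) + i + (d - i)) := by
            rw [pow_add, pow_add]
            ring
        _ = (c - w) ^ i * (c + w) ^ (d - i) * (ζ ^ N) ^ j := by
            rw [show 2 * (N - n) + i + (d - i) = 2 * N by omega]
            rw [pow_mul, hw2, ← pow_mul, mul_comm j N, pow_mul]
        _ = (c - w) ^ i * (c + w) ^ (d - i) := by rw [hζN, one_pow, mul_one]
    have heven : (c - w) ^ i * (c + w) ^ (d - i)
        = ((c - w) * (c - w)) ^ a * ((c + w) * (c + w)) ^ b := by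
      rw [hbb, hi, pow_add, pow_add, mul_pow, mul_pow]
    have h3 : ((-1 : ℂ)) ^ a *
        (ζ ^ (j * (N - n)) * ((1 - ζ ^ j) ^ i * (1 + ζ ^ j) ^ (d - i)))
        = (((Complex.normSq (c - w) ^ a * Complex.normSq (c + w) ^ b : ℝ)) : ℂ) := by
      rw [hT, heven, hA, hB, neg_one_pow_helper]
      push_cast
      ring
    have h5 : ‖((-1 : ℂ)) ^ a *
        (ζ ^ (j * (N - n)) * ((1 - ζ ^ j) ^ i * (1 + ζ ^ j) ^ (d - i)))‖
        = ‖(1 - ζ ^ j) ^ i * (1 + ζ ^ j) ^ (d - i)‖ := by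
      simp only [norm_mul, norm_pow, habsζ, norm_neg, norm_one, one_pow, one_mul]
    have h4 : ‖(1 - ζ ^ j) ^ i * (1 + ζ ^ j) ^ (d - i)‖
        = Complex.normSq (c - w) ^ a * Complex.normSq (c + w) ^ b := by
      have h6 := congrArg (‖·‖) h3
      rw [h5, Complex.norm_real, Real.norm_eq_abs, abs_of_nonneg (mul_nonneg (pow_nonneg (Complex.normSq_nonneg _) _) (pow_nonneg (Complex.normSq_nonneg _) _))] at h6
      exact h6
    rw [h4]
    exact h3
  have E1 := hsum n (by omega)
  have E2 := hsum k hk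
  have hsum_eq : ((N : ℝ)) * ((-1) ^ a * ((krawtchouk d 2 n i : ℤ) : ℝ))
      = ∑ j ∈ Finset.range N, ‖(1 - ζ ^ j) ^ i * (1 + ζ ^ j) ^ (d - i)‖ := by
    have h7 : (((N : ℝ)) * ((-1) ^ a * ((krawtchouk d 2 n i : ℤ) : ℝ)) : ℂ)
        = ((∑ j ∈ Finset.range N,
            ‖(1 - ζ ^ j) ^ i * (1 + ζ ^ j) ^ (d - i)‖ : ℝ) : ℂ) := by
      push_cast
      rw [← Finset.sum_congr rfl fun j (_ : j ∈ Finset.range N) => hkey j]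
      rw [← Finset.mul_sum, E1]
      push_cast
      ring
    exact_mod_cast h7
  have hineq : (N : ℝ) * |((krawtchouk d 2 k i : ℤ) : ℝ)|
      ≤ ∑ j ∈ Finset.range N, ‖(1 - ζ ^ j) ^ i * (1 + ζ ^ j) ^ (d - i)‖ := by
    have h8 : ‖(N : ℂ) * (krawtchouk d 2 k i : ℂ)‖
        = (N : ℝ) * |((krawtchouk d 2 k i : ℤ) : ℝ)| := by
      rw [norm_mul, Complex.norm_natCast, Complex.norm_intCast]
    rw [← h8, ← E2]
    refine le_trans (norm_sum_le _ _) ?_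
    refine Finset.sum_le_sum fun j hj => ?_
    rw [norm_mul, norm_pow, habsζ, one_pow, one_mul]
  rw [← hsum_eq] at hineq
  have hfin : |((krawtchouk d 2 k i : ℤ) : ℝ)| ≤ (-1) ^ a * ((krawtchouk d 2 n i : ℤ) : ℝ) :=
    le_of_mul_le_mul_left hineq (by positivity)
  exact_mod_cast hfin

theorem binary_krawtchouk_bound (d i k : ℕ) (hd : Even d) (hie : Even i)
    (hi : i ≤ d) (hk : k ≤ d) :
    (|krawtchouk d 2 i k| : ℚ)
      ≤ (d.choose (d / 2) : ℚ) * ((d / 2).choose (i / 2) : ℚ) / (d.choose k : ℚ) := by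
  obtain ⟨n, hn⟩ := hd
  obtain ⟨a, ha⟩ := hie
  have hdn : d / 2 = n := by omega
  have hia : i / 2 = a := by omega
  rw [hdn, hia]
  have hck : (0 : ℚ) < (d.choose k : ℚ) := by exact_mod_cast Nat.choose_pos hk
  rw [le_div_iff₀ hck]
  have han : a ≤ n := by omega
  have key : (d.choose k : ℤ) * |krawtchouk d 2 i k|
      ≤ (d.choose n : ℤ) * (n.choose a : ℤ) := by
    have hsym := kraw_symm d i k hi hk
    have habs : (d.choose k : ℤ) * |krawtchouk d 2 i k|
        = (d.choose i : ℤ) * |krawtchouk d 2 k i| := by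
      calc (d.choose k : ℤ) * |krawtchouk d 2 i k|
          = |(d.choose k : ℤ) * krawtchouk d 2 i k| := by
            rw [abs_mul, abs_of_nonneg (by positivity : (0:ℤ) ≤ (d.choose k : ℤ))]
        _ = |(d.choose i : ℤ) * krawtchouk d 2 k i| := by rw [hsym]
        _ = (d.choose i : ℤ) * |krawtchouk d 2 k i| := by
            rw [abs_mul, abs_of_nonneg (by positivity : (0:ℤ) ≤ (d.choose i : ℤ))]
    rw [habs]
    have hb := kraw_abs_le d i k a n hn ha hi hk
    have h2 : (d.choose i : ℤ) * |krawtchouk d 2 k i|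
        ≤ (d.choose i : ℤ) * ((-1) ^ a * krawtchouk d 2 n i) :=
      mul_le_mul_of_nonneg_left hb (by positivity)
    refine le_trans h2 (le_of_eq ?_)
    have hsym2 := kraw_symm d i n hi (by omega)
    have hc := kraw_central n a han
    rw [← hn, ← ha] at hc
    calc (d.choose i : ℤ) * ((-1) ^ a * krawtchouk d 2 n i)
        = (-1) ^ a * ((d.choose i : ℤ) * krawtchouk d 2 n i) := by ring
      _ = (-1) ^ a * ((d.choose n : ℤ) * krawtchouk d 2 i n) := by rw [← hsym2]
      _ = (d.choose n : ℤ) * ((-1) ^ a * krawtchouk d 2 i n) := by ring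
      _ = (d.choose n : ℤ) * ((-1) ^ a * ((-1) ^ a * (n.choose a : ℤ))) := by rw [hc]
      _ = (d.choose n : ℤ) * (((-1) * (-1)) ^ a * (n.choose a : ℤ)) := by rw [mul_pow]; ring
      _ = (d.choose n : ℤ) * (n.choose a : ℤ) := by norm_num
  rw [mul_comm]
  exact_mod_cast key
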